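/- (Necessity part of the spectral decomposition theorem.) Suppose there exist a symmetric invertible matrix M_u ∈ ℝ^{n_u×n_u} and a symmetric invertible matrix K ∈ ℝ^{n×n} such that MX + KXJ = 0, where M = [[M_u, 0],[0, 0]]. Then there exist a symmetric matrix Γ = [[Γ₁₁, 0],[0, 0]] ∈ ℝ^{n×n} with Γ₁₁ ∈ ℝ^{n_u×n_u} invertible, and a symmetric invertible matrix Φ ∈ ℝ^{n_φ×n_φ}, such that: (i) Γ + X_φᵀΦX_φ is invertible, and, setting T := (Γ + X_φᵀΦX_φ)⁻¹, (ii) J₁ᵀΓ₁₁ = Γ₁₁J₁, (iii) X_u T X_φᵀ = 0, (iv) X_φ T X_φᵀ = Φ⁻¹; moreover X_u T X_uᵀ is invertible with M_u = (X_u T X_uᵀ)⁻¹, and there exists a symmetric invertible matrix K'₂₂ ∈ ℝ^{n_φ×n_φ} such that K = X^{-T}·[[−Γ₁₁J₁⁻¹, 0],[0, K'₂₂]]·X⁻¹. -/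

import Mathlib

open Matrix

/-- necessity part of the spectral decomposition theorem:
Let `X = [Xu; Xφ]` be invertible, `J₁` invertible diagonal, `J = diag(J₁, 0)`.
If there exist symmetric invertible `Mu` and symmetric invertible `K` with
`M X + K X J = 0`, `M = diag(Mu, 0)`, then there exist a symmetric `Γ₁₁`
(invertible) and a symmetric invertible `Φ` such that, with
`T = (diag(Γ₁₁,0) + Xφᵀ Φ Xφ)⁻¹`: `J₁ᵀ Γ₁₁ = Γ₁₁ J₁`, `Xu T Xφᵀ = 0`,
`Xφ T Xφᵀ = Φ⁻¹`, `Xu T Xuᵀ` is invertible with `Mu = (Xu T Xuᵀ)⁻¹`, and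
`K = X⁻ᵀ [[−Γ₁₁ J₁⁻¹, 0],[0, K₂₂']] X⁻¹` for some symmetric invertible `K₂₂'`. -/
theorem spectral_decomposition_necessity (nu nφ : ℕ)
    (Xu : Matrix (Fin nu) (Fin nu ⊕ Fin nφ) ℝ)
    (Xφ : Matrix (Fin nφ) (Fin nu ⊕ Fin nφ) ℝ)
    (X : Matrix (Fin nu ⊕ Fin nφ) (Fin nu ⊕ Fin nφ) ℝ)
    (hX : X = fromRows Xu Xφ) (hXUnit : IsUnit X)
    (J₁ : Matrix (Fin nu) (Fin nu) ℝ)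
    (hJ₁diag : ∀ i j, i ≠ j → J₁ i j = 0) (hJ₁Unit : IsUnit J₁)
    (J : Matrix (Fin nu ⊕ Fin nφ) (Fin nu ⊕ Fin nφ) ℝ)
    (hJ : J = fromBlocks J₁ 0 0 0)
    (Mu : Matrix (Fin nu) (Fin nu) ℝ)
    (hMuSymm : Muᵀ = Mu) (hMuUnit : IsUnit Mu)
    (K : Matrix (Fin nu ⊕ Fin nφ) (Fin nu ⊕ Fin nφ) ℝ)
    (hKSymm : Kᵀ = K) (hKUnit : IsUnit K)
    (M : Matrix (Fin nu ⊕ Fin nφ) (Fin nu ⊕ Fin nφ) ℝ)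
    (hM : M = fromBlocks Mu 0 0 0)
    (heq : M * X + K * X * J = 0) :
    ∃ (Γ₁₁ : Matrix (Fin nu) (Fin nu) ℝ) (Φ : Matrix (Fin nφ) (Fin nφ) ℝ),
      Γ₁₁ᵀ = Γ₁₁ ∧ IsUnit Γ₁₁ ∧ Φᵀ = Φ ∧ IsUnit Φ ∧
      IsUnit (fromBlocks Γ₁₁ 0 0 0 + Xφᵀ * Φ * Xφ) ∧
      (let T := (fromBlocks Γ₁₁ 0 0 (0 : Matrix (Fin nφ) (Fin nφ) ℝ)
          + Xφᵀ * Φ * Xφ)⁻¹;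
        J₁ᵀ * Γ₁₁ = Γ₁₁ * J₁ ∧
        Xu * T * Xφᵀ = 0 ∧
        Xφ * T * Xφᵀ = Φ⁻¹ ∧
        IsUnit (Xu * T * Xuᵀ) ∧
        Mu = (Xu * T * Xuᵀ)⁻¹ ∧
        ∃ K₂₂' : Matrix (Fin nφ) (Fin nφ) ℝ, K₂₂'ᵀ = K₂₂' ∧ IsUnit K₂₂' ∧
          K = (X⁻¹)ᵀ * fromBlocks (-(Γ₁₁ * J₁⁻¹)) 0 0 K₂₂' * X⁻¹) := by
  have hXdet : IsUnit X.det := (isUnit_iff_isUnit_det X).mp hXUnit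
  have hXtUnit : IsUnit Xᵀ := by
    rw [isUnit_iff_isUnit_det, det_transpose]; exact hXdet
  have hJ₁det : IsUnit J₁.det := (isUnit_iff_isUnit_det J₁).mp hJ₁Unit
  have hMudet : IsUnit Mu.det := (isUnit_iff_isUnit_det Mu).mp hMuUnit
  set W := Xᵀ * K * X with hW
  have hWsymm : Wᵀ = W := by
    rw [hW]; rw [transpose_mul, transpose_mul, transpose_transpose, hKSymm, mul_assoc]
  have hWunit : IsUnit W := (hXtUnit.mul hKUnit).mul hXUnit
  -- key multiplication identity
  have key : ∀ (D₁ : Matrix (Fin nu) (Fin nu) ℝ) (D₂ : Matrix (Fin nφ) (Fin nφ) ℝ),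
      Xᵀ * fromBlocks D₁ 0 0 D₂ * X = Xuᵀ * D₁ * Xu + Xφᵀ * D₂ * Xφ := by
    intro D₁ D₂
    rw [hX, transpose_fromRows, fromCols_mul_fromBlocks, fromCols_mul_fromRows]
    simp [mul_assoc]
  have h1 : Xᵀ * M * X + W * J = 0 := by
    have h := congrArg (fun Z => Xᵀ * Z) heq
    simpa [mul_add, mul_assoc, hW] using h
  -- block decomposition of W
  set A := W.toBlocks₁₁ with hA
  set B := W.toBlocks₁₂ with hB
  set C := W.toBlocks₂₁ with hC
  set Dm := W.toBlocks₂₂ with hDm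
  have hWb : W = fromBlocks A B C Dm := (fromBlocks_toBlocks W).symm
  have hMsymm : Mᵀ = M := by rw [hM, fromBlocks_transpose, hMuSymm]; simp
  have hXMXsymm : (Xᵀ * M * X)ᵀ = Xᵀ * M * X := by
    rw [transpose_mul, transpose_mul, transpose_transpose, hMsymm, mul_assoc]
  have hWJ : W * J = -(Xᵀ * M * X) := by
    have := h1
    linear_combination (norm := noncomm_ring) this
  have hJW : Jᵀ * W = W * J := by
    have : (W * J)ᵀ = W * J := by
      rw [hWJ, transpose_neg, hXMXsymm]
    rw [← this, transpose_mul, hWsymm]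
  -- extract block equations
  have hblocks : fromBlocks (J₁ᵀ * A) (J₁ᵀ * B) 0 0 = fromBlocks (A * J₁) 0 (C * J₁) 0 := by
    have := hJW
    rw [hWb, hJ, fromBlocks_transpose, fromBlocks_multiply, fromBlocks_multiply] at this
    simpa using this
  rw [fromBlocks_inj] at hblocks
  obtain ⟨hAJ, hBz, hCz, -⟩ := hblocks
  have hJ₁tdet : IsUnit (J₁ᵀ).det := by rwa [det_transpose]
  have hBzero : B = 0 := by
    have h2 : ((J₁ᵀ)⁻¹ * J₁ᵀ) * B = 0 := by
      rw [Matrix.mul_assoc, hBz, Matrix.mul_zero]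
    rwa [nonsing_inv_mul _ hJ₁tdet, Matrix.one_mul] at h2
  have hCzero : C = 0 := by
    have h2 : C * (J₁ * J₁⁻¹) = 0 := by
      rw [← Matrix.mul_assoc, ← hCz, Matrix.zero_mul]
    rwa [mul_nonsing_inv _ hJ₁det, Matrix.mul_one] at h2
  rw [hBzero, hCzero] at hWb
  -- symmetry of blocks
  have hAsymm : Aᵀ = A := by
    ext i j
    have := congrFun (congrFun hWsymm (Sum.inl i)) (Sum.inl j)
    simpa [hA, toBlocks₁₁, transpose_apply] using this
  have hDsymm : Dmᵀ = Dm := by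
    ext i j
    have := congrFun (congrFun hWsymm (Sum.inr i)) (Sum.inr j)
    simpa [hDm, toBlocks₂₂, transpose_apply] using this
  -- invertibility of blocks
  have hdetW : IsUnit W.det := (isUnit_iff_isUnit_det W).mp hWunit
  have hdetAD : IsUnit (A.det * Dm.det) := by
    rwa [hWb, det_fromBlocks_zero₂₁] at hdetW
  have hAdet : IsUnit A.det := isUnit_of_mul_isUnit_left hdetAD
  have hDdet : IsUnit Dm.det := isUnit_of_mul_isUnit_right hdetAD
  have hAUnit : IsUnit A := (isUnit_iff_isUnit_det A).mpr hAdet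
  have hDUnit : IsUnit Dm := (isUnit_iff_isUnit_det Dm).mpr hDdet
  -- XᵀMX in block form
  have hXMX : Xᵀ * M * X = fromBlocks (-(A * J₁)) 0 0 0 := by
    have : W * J = fromBlocks (A * J₁) 0 0 0 := by
      rw [hWb, hJ, fromBlocks_multiply]; simp
    rw [← neg_eq_of_add_eq_zero_left h1, this]
    simp [fromBlocks_neg]
  -- the matrix S and its structure
  have hXuMu : Xuᵀ * Mu * Xu = fromBlocks (-(A * J₁)) 0 0 0 := by
    have h := key Mu 0
    rw [← hM, hXMX] at h
    simpa using h.symm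
  have hS : fromBlocks (-(A * J₁)) 0 0 (0 : Matrix (Fin nφ) (Fin nφ) ℝ)
      + Xφᵀ * (1 : Matrix (Fin nφ) (Fin nφ) ℝ) * Xφ
      = Xᵀ * fromBlocks Mu 0 0 (1 : Matrix (Fin nφ) (Fin nφ) ℝ) * X := by
    rw [key Mu 1, hXuMu]
  have hDblk : IsUnit (fromBlocks Mu 0 0 (1 : Matrix (Fin nφ) (Fin nφ) ℝ)) := by
    rw [isUnit_iff_isUnit_det, det_fromBlocks_zero₂₁, det_one, mul_one]
    exact hMudet
  have hSUnit : IsUnit (fromBlocks (-(A * J₁)) 0 0 (0 : Matrix (Fin nφ) (Fin nφ) ℝ)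
      + Xφᵀ * (1 : Matrix (Fin nφ) (Fin nφ) ℝ) * Xφ) := by
    rw [hS]; exact (hXtUnit.mul hDblk).mul hXUnit
  -- choose Γ₁₁ and Φ
  refine ⟨-(A * J₁), 1, ?_, (hAUnit.mul hJ₁Unit).neg, by simp, isUnit_one, hSUnit, ?_⟩
  · rw [transpose_neg, transpose_mul, hAsymm, ← hAJ]
  -- inverse of S
  set D' : Matrix (Fin nu ⊕ Fin nφ) (Fin nu ⊕ Fin nφ) ℝ :=
    fromBlocks Mu⁻¹ 0 0 1 with hD'
  have hDD' : fromBlocks Mu 0 0 (1 : Matrix (Fin nφ) (Fin nφ) ℝ) * D' = 1 := by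
    rw [hD', fromBlocks_multiply]
    simp [mul_nonsing_inv _ hMudet, ← fromBlocks_one]
  have hright : (fromBlocks (-(A * J₁)) 0 0 (0 : Matrix (Fin nφ) (Fin nφ) ℝ)
      + Xφᵀ * (1 : Matrix (Fin nφ) (Fin nφ) ℝ) * Xφ) * (X⁻¹ * D' * (X⁻¹)ᵀ) = 1 := by
    rw [hS]
    have hr : Xᵀ * fromBlocks Mu 0 0 (1 : Matrix (Fin nφ) (Fin nφ) ℝ) * X
        * (X⁻¹ * D' * (X⁻¹)ᵀ)
        = Xᵀ * (fromBlocks Mu 0 0 (1 : Matrix (Fin nφ) (Fin nφ) ℝ) * (X * X⁻¹) * D')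
          * (X⁻¹)ᵀ := by noncomm_ring
    rw [hr, mul_nonsing_inv _ hXdet, mul_one, hDD', mul_one, transpose_nonsing_inv,
      mul_nonsing_inv _ (by rwa [det_transpose] : IsUnit Xᵀ.det)]
  have hT : (fromBlocks (-(A * J₁)) 0 0 (0 : Matrix (Fin nφ) (Fin nφ) ℝ)
      + Xφᵀ * (1 : Matrix (Fin nφ) (Fin nφ) ℝ) * Xφ)⁻¹ = X⁻¹ * D' * (X⁻¹)ᵀ :=
    inv_eq_right_inv hright
  -- row identities
  have hrows : Xu * X⁻¹ = fromCols 1 0 ∧ Xφ * X⁻¹ = fromCols 0 1 := by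
    have h := mul_nonsing_inv X hXdet
    nth_rewrite 1 [hX] at h
    rw [fromRows_mul, ← fromBlocks_one, ← fromRows_fromCols_eq_fromBlocks,
      fromRows_ext_iff] at h
    exact h
  obtain ⟨hXuInv, hXφInv⟩ := hrows
  have hXitXu : (X⁻¹)ᵀ * Xuᵀ = fromRows 1 0 := by
    rw [← transpose_mul, hXuInv, transpose_fromCols, transpose_one, transpose_zero]
  have hXitXφ : (X⁻¹)ᵀ * Xφᵀ = fromRows 0 1 := by
    rw [← transpose_mul, hXφInv, transpose_fromCols, transpose_one, transpose_zero]
  refine ⟨?_, ?_, ?_, ?_, ?_, ?_⟩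
  · -- J₁ᵀ Γ₁₁ = Γ₁₁ J₁
    rw [mul_neg, neg_mul, ← mul_assoc, hAJ, mul_assoc]
  · -- Xu T Xφᵀ = 0
    rw [hT, show Xu * (X⁻¹ * D' * (X⁻¹)ᵀ) * Xφᵀ
        = Xu * X⁻¹ * D' * ((X⁻¹)ᵀ * Xφᵀ) from by simp only [Matrix.mul_assoc],
      hXuInv, hXitXφ, hD', fromCols_mul_fromBlocks, fromCols_mul_fromRows]
    simp
  · -- Xφ T Xφᵀ = 1⁻¹
    rw [hT, show Xφ * (X⁻¹ * D' * (X⁻¹)ᵀ) * Xφᵀ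
        = Xφ * X⁻¹ * D' * ((X⁻¹)ᵀ * Xφᵀ) from by simp only [Matrix.mul_assoc],
      hXφInv, hXitXφ, hD', fromCols_mul_fromBlocks, fromCols_mul_fromRows]
    simp
  · -- IsUnit (Xu T Xuᵀ)
    rw [hT, show Xu * (X⁻¹ * D' * (X⁻¹)ᵀ) * Xuᵀ
        = Xu * X⁻¹ * D' * ((X⁻¹)ᵀ * Xuᵀ) from by simp only [Matrix.mul_assoc],
      hXuInv, hXitXu, hD', fromCols_mul_fromBlocks, fromCols_mul_fromRows]
    simp only [Matrix.one_mul, Matrix.zero_mul, Matrix.mul_zero, Matrix.mul_one,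
      add_zero, zero_add]
    exact isUnit_nonsing_inv_iff.mpr hMuUnit
  · -- Mu = (Xu T Xuᵀ)⁻¹
    rw [hT, show Xu * (X⁻¹ * D' * (X⁻¹)ᵀ) * Xuᵀ
        = Xu * X⁻¹ * D' * ((X⁻¹)ᵀ * Xuᵀ) from by simp only [Matrix.mul_assoc],
      hXuInv, hXitXu, hD', fromCols_mul_fromBlocks, fromCols_mul_fromRows]
    simp only [Matrix.one_mul, Matrix.zero_mul, Matrix.mul_zero, Matrix.mul_one,
      add_zero, zero_add]
    rw [nonsing_inv_nonsing_inv _ hMudet]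
  · -- K decomposition
    refine ⟨Dm, hDsymm, hDUnit, ?_⟩
    have hG : -(-(A * J₁) * J₁⁻¹) = A := by
      rw [neg_mul, neg_neg, mul_assoc, mul_nonsing_inv _ hJ₁det, mul_one]
    rw [hG, ← hWb, hW]
    have : (X⁻¹)ᵀ * (Xᵀ * K * X) * X⁻¹
        = ((X⁻¹)ᵀ * Xᵀ) * K * (X * X⁻¹) := by noncomm_ring
    rw [this, ← transpose_mul, mul_nonsing_inv _ hXdet, transpose_one,
      Matrix.one_mul, Matrix.mul_one]
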